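/- Let f ∈ S_{(d_1,d_2)} be a nonzero bihomogeneous polynomial of bidegree (d_1,d_2) and A = T/Ann(f). Then for all 0 ≤ i ≤ d_1 and 0 ≤ j ≤ d_2, the multiplication map A_{(i,j)} × A_{(d_1−i,d_2−j)} → A_{(d_1,d_2)} is a perfect pairing: dim_K A_{(d_1,d_2)} = 1, and if a ∈ A_{(i,j)} satisfies a·b = 0 for all b ∈ A_{(d_1−i,d_2−j)}, then a = 0. -/

import Mathlib

open MvPolynomial

namespace CW

variable {σ K : Type*} [CommSemiring K]

/-- A generic "monomial contraction-type" action of the polynomial ring on itself,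
determined by a structure coefficient `ν c a` (the coefficient produced when the
operator monomial with exponent `a` acts on the monomial with exponent `c`). -/
noncomputable def genAct (ν : (σ →₀ ℕ) → (σ →₀ ℕ) → K) (α f : MvPolynomial σ K) :
    MvPolynomial σ K :=
  Finsupp.sum (AddMonoidAlgebra.coeff α) fun a ca =>
    Finsupp.sum (AddMonoidAlgebra.coeff f) fun c cf => monomial (c - a) (ν c a * (ca * cf))

theorem genAct_zero_left (ν : (σ →₀ ℕ) → (σ →₀ ℕ) → K) (f : MvPolynomial σ K) :
    genAct ν 0 f = 0 :=
  Finsupp.sum_zero_index (h := fun _ _ => _)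

theorem genAct_zero_right (ν : (σ →₀ ℕ) → (σ →₀ ℕ) → K) (α : MvPolynomial σ K) :
    genAct ν α 0 = 0 := by
  unfold genAct
  simp only [AddMonoidAlgebra.coeff_zero, Finsupp.sum_zero_index, Finsupp.sum_fun_zero]

theorem genAct_add_left (ν : (σ →₀ ℕ) → (σ →₀ ℕ) → K) (α β f : MvPolynomial σ K) :
    genAct ν (α + β) f = genAct ν α f + genAct ν β f := by
  unfold genAct
  rw [AddMonoidAlgebra.coeff_add]
  apply Finsupp.sum_add_index'
  · intro a
    simp only [mul_zero, zero_mul, map_zero, Finsupp.sum_fun_zero]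
  · intro a b₁ b₂
    rw [← Finsupp.sum_add]
    apply Finsupp.sum_congr
    intro c _
    rw [add_mul, mul_add, map_add]

theorem genAct_add_right (ν : (σ →₀ ℕ) → (σ →₀ ℕ) → K) (α f g : MvPolynomial σ K) :
    genAct ν α (f + g) = genAct ν α f + genAct ν α g := by
  unfold genAct
  rw [← Finsupp.sum_add]
  apply Finsupp.sum_congr
  intro a _
  rw [AddMonoidAlgebra.coeff_add]
  apply Finsupp.sum_add_index'
  · intro c
    simp only [mul_zero, map_zero]
  · intro c c₁ c₂
    rw [mul_add, mul_add, map_add]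

theorem genAct_monomial (ν : (σ →₀ ℕ) → (σ →₀ ℕ) → K) (a c : σ →₀ ℕ) (r s : K) :
    genAct ν (monomial a r) (monomial c s) = monomial (c - a) (ν c a * (r * s)) := by
  unfold genAct
  rw [← single_eq_monomial a r, ← single_eq_monomial c s]
  simp only [AddMonoidAlgebra.coeff_single]
  rw [Finsupp.sum_single_index, Finsupp.sum_single_index]
  · simp only [mul_zero, map_zero]
  · simp only [mul_zero, zero_mul, map_zero, Finsupp.sum_fun_zero]

theorem genAct_mul {ν : (σ →₀ ℕ) → (σ →₀ ℕ) → K}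
    (hν : ∀ c a b, ν c (a + b) = ν c b * ν (c - b) a) (α β f : MvPolynomial σ K) :
    genAct ν (α * β) f = genAct ν α (genAct ν β f) := by
  induction α using MvPolynomial.induction_on' with
  | add p q hp hq => rw [add_mul, genAct_add_left, hp, hq, genAct_add_left]
  | monomial a r =>
    induction β using MvPolynomial.induction_on' with
    | add p q hp hq =>
      rw [mul_add, genAct_add_left, hp, hq, ← genAct_add_right, genAct_add_left]
    | monomial b s =>
      induction f using MvPolynomial.induction_on' with
      | add p q hp hq =>
        rw [genAct_add_right, hp, hq, ← genAct_add_right, ← genAct_add_right]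
      | monomial c t =>
        rw [monomial_mul, genAct_monomial, genAct_monomial, genAct_monomial,
          show c - (a + b) = c - b - a from by rw [tsub_tsub, add_comm], hν]
        congr 1
        ring

/-- The annihilator ideal of `f` under the action `genAct ν`. -/
noncomputable def annG (ν : (σ →₀ ℕ) → (σ →₀ ℕ) → K)
    (hν : ∀ c a b, ν c (a + b) = ν c b * ν (c - b) a) (f : MvPolynomial σ K) :
    Ideal (MvPolynomial σ K) where
  carrier := {α | genAct ν α f = 0}
  zero_mem' := genAct_zero_left ν f
  add_mem' := by
    intro a b ha hb
    show genAct ν (a + b) f = 0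
    rw [genAct_add_left, ha, hb, add_zero]
  smul_mem' := by
    intro c α hα
    show genAct ν (c * α) f = 0
    rw [genAct_mul hν, hα, genAct_zero_right]

/-- Structure coefficient of the contraction (apolarity) action: `X^a` sends `x^c`
to `x^(c-a)` if `a ≤ c` and to `0` otherwise. -/
noncomputable def cnu (c a : σ →₀ ℕ) : K :=
  open scoped Classical in if a ≤ c then 1 else 0

theorem cnu_mul (c a b : σ →₀ ℕ) :
    (cnu c (a + b) : K) = cnu c b * cnu (c - b) a := by
  classical
  unfold cnu
  by_cases hb : b ≤ c
  · by_cases ha : a ≤ c - b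
    · have h : a + b ≤ c := (le_tsub_iff_right hb).mp ha
      simp [hb, ha, h]
    · have h : ¬ a + b ≤ c := fun h => ha ((le_tsub_iff_right hb).mpr h)
      simp [hb, ha, h]
  · have h : ¬ a + b ≤ c := fun h => hb (le_trans le_add_self h)
    simp [hb, h]

/-- The contraction action `α ∘ f`. -/
noncomputable def cAct (α f : MvPolynomial σ K) : MvPolynomial σ K :=
  genAct cnu α f

/-- The annihilator `Ann(f)` of `f` under the contraction action, as an ideal. -/
noncomputable def cAnn (f : MvPolynomial σ K) : Ideal (MvPolynomial σ K) :=
  annG cnu cnu_mul f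

theorem mem_cAnn {f α : MvPolynomial σ K} : α ∈ cAnn f ↔ cAct α f = 0 := Iff.rfl

/-- The `K`-submodule of polynomials all of whose monomials satisfy `P`. -/
noncomputable def bihom (K : Type*) [CommSemiring K] {σ : Type*} (P : (σ →₀ ℕ) → Prop) :
    Submodule K (MvPolynomial σ K) where
  carrier := {p | ∀ c ∈ p.support, P c}
  zero_mem' := by
    intro c hc
    simp at hc
  add_mem' := by
    classical
    intro p q hp hq c hc
    rcases Finset.mem_union.mp (MvPolynomial.support_add hc) with h | h
    · exact hp c h
    · exact hq c h
  smul_mem' := by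
    intro k p hp c hc
    exact hp c (MvPolynomial.support_smul hc)

/-- The x-degree of an exponent vector. -/
def degX {n m : ℕ} (c : (Fin (n + 1) ⊕ Fin m) →₀ ℕ) : ℕ := ∑ r, c (Sum.inl r)

/-- The u-degree of an exponent vector. -/
def degU {n m : ℕ} (c : (Fin (n + 1) ⊕ Fin m) →₀ ℕ) : ℕ := ∑ k, c (Sum.inr k)

/-- The bihomogeneous component `T_(i,j)`. -/
noncomputable def Tbi (K : Type*) [CommSemiring K] {n m : ℕ} (i j : ℕ) :
    Submodule K (MvPolynomial (Fin (n + 1) ⊕ Fin m) K) :=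
  bihom K fun c => degX c = i ∧ degU c = j

/-- The bigraded component `A_(i,j)` of `A = T ⧸ Ann(f)`: the image of `T_(i,j)`
in the quotient. -/
noncomputable def Abi {K : Type*} [Field K] {n m : ℕ}
    (f : MvPolynomial (Fin (n + 1) ⊕ Fin m) K) (i j : ℕ) :
    Submodule K (MvPolynomial (Fin (n + 1) ⊕ Fin m) K ⧸ cAnn f) :=
  (Tbi K i j).map (Ideal.Quotient.mkₐ K (cAnn f)).toLinearMap


section Aux

variable {K : Type*} [CommSemiring K] {n m : ℕ}

local notation "Idx" => (Fin (n + 1) ⊕ Fin m)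

lemma degX_le_of_le {a c : Idx →₀ ℕ} (h : a ≤ c) : degX a ≤ degX c :=
  Finset.sum_le_sum fun r _ => h _

lemma degU_le_of_le {a c : Idx →₀ ℕ} (h : a ≤ c) : degU a ≤ degU c :=
  Finset.sum_le_sum fun r _ => h _

lemma degX_tsub {a c : Idx →₀ ℕ} (h : a ≤ c) : degX (c - a) = degX c - degX a := by
  have : degX (c - a) + degX a = degX c := by
    rw [degX, degX, degX, ← Finset.sum_add_distrib]
    exact Finset.sum_congr rfl fun r _ => by
      rw [Finsupp.tsub_apply]; exact tsub_add_cancel_of_le (h _)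
  omega

lemma degU_tsub {a c : Idx →₀ ℕ} (h : a ≤ c) : degU (c - a) = degU c - degU a := by
  have : degU (c - a) + degU a = degU c := by
    rw [degU, degU, degU, ← Finset.sum_add_distrib]
    exact Finset.sum_congr rfl fun r _ => by
      rw [Finsupp.tsub_apply]; exact tsub_add_cancel_of_le (h _)
  omega

lemma eq_of_le_of_deg {c c' : Idx →₀ ℕ} (hle : c ≤ c')
    (hX : degX c = degX c') (hU : degU c = degU c') : c = c' := by
  have hsX : ∀ r ∈ (Finset.univ : Finset (Fin (n+1))), c (Sum.inl r) = c' (Sum.inl r) :=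
    (Finset.sum_eq_sum_iff_of_le fun r _ => hle _).mp hX
  have hsU : ∀ k ∈ (Finset.univ : Finset (Fin m)), c (Sum.inr k) = c' (Sum.inr k) :=
    (Finset.sum_eq_sum_iff_of_le fun k _ => hle _).mp hU
  ext s
  cases s with
  | inl r => exact hsX r (Finset.mem_univ r)
  | inr k => exact hsU k (Finset.mem_univ k)

lemma eq_zero_of_deg_zero {c : Idx →₀ ℕ} (hX : degX c = 0) (hU : degU c = 0) : c = 0 := by
  have hsX := Finset.sum_eq_zero_iff.mp hX
  have hsU := Finset.sum_eq_zero_iff.mp hU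
  ext s
  cases s with
  | inl r => exact hsX r (Finset.mem_univ r)
  | inr k => exact hsU k (Finset.mem_univ k)

lemma monomial_mem_Tbi {i j : ℕ} {e : Idx →₀ ℕ} {k : K}
    (h : k ≠ 0 → degX e = i ∧ degU e = j) : monomial e k ∈ Tbi K i j := by
  classical
  intro c hc
  rw [MvPolynomial.support_monomial] at hc
  by_cases hk : k = 0
  · rw [if_pos hk] at hc; exact absurd hc (Finset.notMem_empty c)
  · rw [if_neg hk, Finset.mem_singleton] at hc
    subst hc; exact h hk

lemma cAct_monomial_of_mem {p q : ℕ} {g : MvPolynomial Idx K} (hg : g ∈ Tbi K p q)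
    {c : Idx →₀ ℕ} (hcX : degX c = p) (hcU : degU c = q) :
    cAct (monomial c (1 : K)) g = C (coeff c g) := by
  classical
  unfold cAct genAct
  rw [← single_eq_monomial]
  simp only [AddMonoidAlgebra.coeff_single]
  rw [Finsupp.sum_single_index (by
    simp only [mul_zero, zero_mul, map_zero, Finsupp.sum_fun_zero])]
  rw [Finsupp.sum, Finset.sum_eq_single c]
  · have h1 : (cnu c c : K) = 1 := if_pos le_rfl
    rw [tsub_self, h1, one_mul, one_mul, ← C_apply]
    rfl
  · intro b hb hbc
    have hdb := hg b hb
    have hnc : ¬ c ≤ b := fun h =>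
      hbc ((eq_of_le_of_deg h (by rw [hcX, hdb.1]) (by rw [hcU, hdb.2])).symm)
    have : (cnu b c : K) = 0 := if_neg hnc
    rw [this, zero_mul, map_zero]
  · intro hc
    rw [Finsupp.notMem_support_iff] at hc
    rw [hc, mul_zero, mul_zero, map_zero]

lemma cAct_mem_Tbi {i j p q : ℕ} {α g : MvPolynomial Idx K}
    (hα : α ∈ Tbi K i j) (hg : g ∈ Tbi K p q) :
    cAct α g ∈ Tbi K (p - i) (q - j) := by
  classical
  unfold cAct genAct
  rw [Finsupp.sum]
  refine Submodule.sum_mem _ fun a ha => ?_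
  rw [Finsupp.sum]
  refine Submodule.sum_mem _ fun c hc => ?_
  refine monomial_mem_Tbi fun hk => ?_
  have hac : a ≤ c := by
    by_contra hn
    exact hk (by rw [show (cnu c a : K) = 0 from if_neg hn, zero_mul])
  have hda := hα a ha
  have hdc := hg c hc
  rw [degX_tsub hac, degU_tsub hac, hda.1, hda.2, hdc.1, hdc.2]
  exact ⟨rfl, rfl⟩

lemma eq_C_of_mem_Tbi00 {g : MvPolynomial Idx K} (hg : g ∈ Tbi K 0 0) :
    g = C (coeff 0 g) := by
  apply MvPolynomial.ext
  intro c
  rw [coeff_C]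
  by_cases hc : c = 0
  · rw [if_pos hc.symm, hc]
  · rw [if_neg fun h => hc h.symm]
    by_contra hne
    have := hg c (MvPolynomial.mem_support_iff.mpr hne)
    exact hc (eq_zero_of_deg_zero this.1 this.2)

lemma cAct_C (lam : K) (g : MvPolynomial Idx K) : cAct (C lam) g = lam • g := by
  classical
  unfold cAct genAct
  rw [C_apply, ← single_eq_monomial]
  simp only [AddMonoidAlgebra.coeff_single]
  rw [Finsupp.sum_single_index (by
    simp only [mul_zero, zero_mul, map_zero, Finsupp.sum_fun_zero])]
  conv_rhs => rw [as_sum g, Finset.smul_sum]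
  refine Finset.sum_congr rfl fun c _ => ?_
  show monomial (c - 0) (cnu c 0 * (lam * coeff c g)) = lam • monomial c (coeff c g)
  rw [show (cnu c 0 : K) = 1 from if_pos (zero_le (a := c)), one_mul, tsub_zero,
    smul_monomial, smul_eq_mul]


end Aux





section Main

variable {K : Type*} [CommRing K] {n m : ℕ}

lemma genAct_sub {σ : Type*} (ν : (σ →₀ ℕ) → (σ →₀ ℕ) → K) (α β f : MvPolynomial σ K) :
    genAct ν (α - β) f = genAct ν α f - genAct ν β f := by
  have h := genAct_add_left ν (α - β) β f
  rw [sub_add_cancel] at h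
  rw [h]; ring

end Main

theorem stmt_8 {K : Type*} [Field K] [CharZero K] (n m d₁ d₂ : ℕ)
    (f : MvPolynomial (Fin (n + 1) ⊕ Fin m) K)
    (hf0 : f ≠ 0) (hf : f ∈ Tbi K (n := n) (m := m) d₁ d₂)
    (i j : ℕ) (hi : i ≤ d₁) (hj : j ≤ d₂) :
    Module.finrank K (Abi f d₁ d₂) = 1 ∧
    ∀ a ∈ Abi f i j, (∀ b ∈ Abi f (d₁ - i) (d₂ - j), a * b = 0) → a = 0 := by
  classical
  obtain ⟨c₀, hc₀⟩ := (MvPolynomial.support_nonempty.mpr hf0)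
  have hc₀d := hf c₀ hc₀
  have hfc₀ : coeff c₀ f ≠ 0 := MvPolynomial.mem_support_iff.mp hc₀
  set π := Ideal.Quotient.mkₐ K (cAnn f) with hπ
  have hπmk : ∀ x, π x = Ideal.Quotient.mk (cAnn f) x := fun x => rfl
  set x := π (monomial c₀ (1 : K)) with hxdef
  have hmono0 : monomial c₀ (1 : K) ∈ Tbi K d₁ d₂ :=
    monomial_mem_Tbi fun _ => hc₀d
  have hact₀ : cAct (monomial c₀ (1 : K)) f = C (coeff c₀ f) :=
    cAct_monomial_of_mem hf hc₀d.1 hc₀d.2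
  have hx0 : x ≠ 0 := by
    intro h
    have hm : monomial c₀ (1 : K) ∈ cAnn f := Ideal.Quotient.eq_zero_iff_mem.mp h
    rw [mem_cAnn, hact₀] at hm
    exact hfc₀ (by simpa using hm)
  constructor
  · have hspan : Abi f d₁ d₂ = Submodule.span K {x} := by
      apply le_antisymm
      · rintro a ⟨α, hα, rfl⟩
        have hmem : cAct α f ∈ Tbi K 0 0 := by
          simpa [Nat.sub_self] using cAct_mem_Tbi hα hf
        set lam := coeff 0 (cAct α f) / coeff c₀ f with hlam
        have hkey : α - C lam * monomial c₀ 1 ∈ cAnn f := by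
          rw [mem_cAnn]
          show genAct cnu _ f = 0
          rw [genAct_sub, genAct_mul cnu_mul]
          show cAct α f - cAct (C lam) (cAct (monomial c₀ 1) f) = 0
          rw [hact₀, cAct_C, eq_C_of_mem_Tbi00 hmem, smul_eq_C_mul, ← C_mul, hlam,
            div_mul_cancel₀ _ hfc₀, sub_self]
        have hmk : Ideal.Quotient.mk (cAnn f) α
            = Ideal.Quotient.mk (cAnn f) (C lam * monomial c₀ 1) :=
          (Ideal.Quotient.mk_eq_mk_iff_sub_mem _ _).mpr hkey
        refine Submodule.mem_span_singleton.mpr ⟨lam, ?_⟩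
        show lam • x = π α
        rw [hxdef, ← map_smul, MvPolynomial.smul_eq_C_mul, hπmk, hπmk, hmk]
      · rw [Submodule.span_le, Set.singleton_subset_iff]
        exact ⟨monomial c₀ 1, hmono0, rfl⟩
    rw [hspan]
    exact finrank_span_singleton hx0
  · rintro a ⟨α, hα, rfl⟩ hb
    set g := cAct α f with hg
    have hgmem : g ∈ Tbi K (d₁ - i) (d₂ - j) := cAct_mem_Tbi hα hf
    have hg0 : g = 0 := by
      by_contra hne
      obtain ⟨c, hc⟩ := MvPolynomial.support_nonempty.mpr hne
      have hcd := hgmem c hc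
      have hβ : monomial c (1 : K) ∈ Tbi K (d₁ - i) (d₂ - j) :=
        monomial_mem_Tbi fun _ => hcd
      have hzero := hb (π (monomial c 1)) ⟨monomial c 1, hβ, rfl⟩
      have hmem : α * monomial c (1 : K) ∈ cAnn f := by
        rw [← Ideal.Quotient.eq_zero_iff_mem]
        rw [map_mul]
        exact hzero
      rw [mem_cAnn] at hmem
      have hact : cAct (monomial c 1) g = 0 := by
        rw [hg]
        show genAct cnu (monomial c 1) (genAct cnu α f) = 0
        rw [← genAct_mul cnu_mul, mul_comm]
        exact hmem
      rw [cAct_monomial_of_mem hgmem hcd.1 hcd.2] at hact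
      exact MvPolynomial.mem_support_iff.mp hc (by simpa using hact)
    show π α = 0
    rw [hπmk]
    exact Ideal.Quotient.eq_zero_iff_mem.mpr hg0


end CW
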